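/- arXiv:2312.00620 — 4 statements merged into one kernel-verified Lean document; each statement's English description precedes it below -/
import Mathlib

section
/- For n > k ≥ 4, the graph (K_{k-3} ∪ I_{n-k+2}) ∨ K_1 is connected, contains no path on k vertices, and has exactly C(k-2,2) + (n-k+2) edges. -/
open SimpleGraph

/-- `H` has a copy in `G`, i.e. `G` contains `H` as a (not necessarily induced) subgraph. -/
def CopyIn {α β : Type*} (H : SimpleGraph α) (G : SimpleGraph β) : Prop :=
  ∃ f : α ↪ β, ∀ a b, H.Adj a b → G.Adj (f a) (f b)

/-- The join `G ∨ H` of two graphs: disjoint union plus all edges in between. -/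
def graphJoin {α β : Type*} (G : SimpleGraph α) (H : SimpleGraph β) : SimpleGraph (α ⊕ β) where
  Adj x y := (∃ a b, x = Sum.inl a ∧ y = Sum.inl b ∧ G.Adj a b) ∨
    (∃ a b, x = Sum.inr a ∧ y = Sum.inr b ∧ H.Adj a b) ∨
    (x.isLeft ∧ y.isRight) ∨ (x.isRight ∧ y.isLeft)
  symm := by
    constructor
    rintro x y (⟨a, b, rfl, rfl, h⟩ | ⟨a, b, rfl, rfl, h⟩ | ⟨h1, h2⟩ | ⟨h1, h2⟩)
    · exact Or.inl ⟨b, a, rfl, rfl, h.symm⟩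
    · exact Or.inr (Or.inl ⟨b, a, rfl, rfl, h.symm⟩)
    · exact Or.inr (Or.inr (Or.inr ⟨h2, h1⟩))
    · exact Or.inr (Or.inr (Or.inl ⟨h2, h1⟩))
  loopless := by
    constructor
    rintro x (⟨a, b, rfl, heq, h⟩ | ⟨a, b, rfl, heq, h⟩ | ⟨h1, h2⟩ | ⟨h1, h2⟩)
    · cases heq; exact G.irrefl h
    · cases heq; exact H.irrefl h
    · cases x <;> simp_all
    · cases x <;> simp_all

/-- A matching with `t` edges. -/
def matchingGraph (t : ℕ) : SimpleGraph (Fin t × Fin 2) :=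
  SimpleGraph.fromRel (fun p q => p.1 = q.1)

/-- The star with `t` edges. -/
def starGraph (t : ℕ) : SimpleGraph (Fin 1 ⊕ Fin t) := completeBipartiteGraph (Fin 1) (Fin t)

/-- Turán number of a single forbidden graph. -/
noncomputable def exNum1 {α : Type*} (n : ℕ) (A : SimpleGraph α) : ℕ :=
  sSup {e | ∃ G : SimpleGraph (Fin n), ¬ CopyIn A G ∧ e = G.edgeSet.ncard}

/-- Turán number of two forbidden graphs. -/
noncomputable def exNum2 {α β : Type*} (n : ℕ) (A : SimpleGraph α) (B : SimpleGraph β) : ℕ :=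
  sSup {e | ∃ G : SimpleGraph (Fin n),
    ¬ CopyIn A G ∧ ¬ CopyIn B G ∧ e = G.edgeSet.ncard}

/-- Connected Turán number of two forbidden graphs. -/
noncomputable def exConn2 {α β : Type*} (n : ℕ) (A : SimpleGraph α) (B : SimpleGraph β) : ℕ :=
  sSup {e | ∃ G : SimpleGraph (Fin n),
    G.Connected ∧ ¬ CopyIn A G ∧ ¬ CopyIn B G ∧ e = G.edgeSet.ncard}

/-- Turán number of a family of forbidden graphs. -/
noncomputable def exNumFam (n : ℕ) (F : Set (Σ V : Type, SimpleGraph V)) : ℕ :=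
  sSup {e | ∃ G : SimpleGraph (Fin n),
    (∀ M ∈ F, ¬ CopyIn M.2 G) ∧ e = G.edgeSet.ncard}

/-- The family of graphs obtained from `H` by deleting one color class of a proper coloring
of `H` with `χ(H)` colors. -/
def delClassFam {W : Type} (H : SimpleGraph W) : Set (Σ V : Type, SimpleGraph V) :=
  {M | ∃ (m : ℕ) (C : H.Coloring (Fin m)) (c : Fin m),
    H.chromaticNumber = (m : ℕ∞) ∧
    M = ⟨{v : W | C v ≠ c}, H.induce {v : W | C v ≠ c}⟩}

/-- The family of graphs obtained from `H` by deleting two adjacent vertices. -/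
def delPairFam {W : Type} (H : SimpleGraph W) : Set (Σ V : Type, SimpleGraph V) :=
  {M | ∃ u v : W, H.Adj u v ∧
    M = ⟨{x : W | x ≠ u ∧ x ≠ v}, H.induce {x : W | x ≠ u ∧ x ≠ v}⟩}
theorem extremal_graph_one_aux (c m : ℕ) :
    (graphJoin ((completeGraph (Fin (c+1))) ⊕g (⊥ : SimpleGraph (Fin (m+3))))
        (completeGraph (Fin 1))).Connected ∧
    ¬ CopyIn (pathGraph (c+4))
      (graphJoin ((completeGraph (Fin (c+1))) ⊕g (⊥ : SimpleGraph (Fin (m+3))))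
        (completeGraph (Fin 1))) ∧
    (graphJoin ((completeGraph (Fin (c+1))) ⊕g (⊥ : SimpleGraph (Fin (m+3))))
        (completeGraph (Fin 1))).edgeSet.ncard = Nat.choose (c+2) 2 + (m+3) := by
  classical
  set G := graphJoin ((completeGraph (Fin (c+1))) ⊕g (⊥ : SimpleGraph (Fin (m+3))))
      (completeGraph (Fin 1)) with hG
  -- basic adjacency facts
  have h1 : ∀ (u : Fin (c+1) ⊕ Fin (m+3)) (z : Fin 1), G.Adj (Sum.inl u) (Sum.inr z) := by
    intro u z
    exact Or.inr (Or.inr (Or.inl ⟨rfl, rfl⟩))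
  have h2 : ∀ a b : Fin (c+1), a ≠ b →
      G.Adj (Sum.inl (Sum.inl a)) (Sum.inl (Sum.inl b)) := by
    intro a b hab
    exact Or.inl ⟨Sum.inl a, Sum.inl b, rfl, rfl, hab⟩
  have h3 : ∀ (b : Fin (m+3)) (w : _), G.Adj (Sum.inl (Sum.inr b)) w → w = Sum.inr 0 := by
    rintro b w (⟨a', b', heq, rfl, hadj⟩ | ⟨a', b', heq, rfl, hadj⟩ | ⟨hx, hy⟩ | ⟨hx, hy⟩)
    · cases heq; cases b' <;> simp_all [SimpleGraph.sum]
    · simp at heq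
    · rcases w with u | z
      · simp at hy
      · exact congrArg Sum.inr (Subsingleton.elim z 0)
    · simp at hx
  refine ⟨?_, ?_, ?_⟩
  · -- connected
    have hreach : ∀ v, G.Reachable v (Sum.inr 0) := by
      rintro (u | z)
      · exact (h1 u 0).reachable
      · rw [Subsingleton.elim z 0]
    haveI : Nonempty ((Fin (c+1) ⊕ Fin (m+3)) ⊕ Fin 1) := ⟨Sum.inr 0⟩
    exact ⟨fun u v => (hreach u).trans (hreach v).symm⟩
  · -- no path
    rintro ⟨f, hf⟩
    have hcen : ∀ i j : Fin (c+4), f i = Sum.inr 0 → f j = Sum.inr 0 → i = j :=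
      fun i j hi hj => f.injective (hi.trans hj.symm)
    have hnb : ∀ (i j : Fin (c+4)) (b : Fin (m+3)), f i = Sum.inl (Sum.inr b) →
        (pathGraph (c+4)).Adj i j → f j = Sum.inr 0 := by
      intro i j b hfi hadj
      exact h3 b _ (hfi ▸ hf i j hadj)
    have hA : ∀ (i : Fin (c+4)) (b : Fin (m+3)), f i = Sum.inl (Sum.inr b) →
        i.val = 0 ∨ i.val = c+3 := by
      intro i b hfi
      by_contra h
      push_neg at h
      have hi1 : 0 < i.val := Nat.pos_of_ne_zero h.1
      have hi2 : i.val < c + 3 := lt_of_le_of_ne (by omega) h.2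
      have e1 : f ⟨i.val - 1, by omega⟩ = Sum.inr 0 :=
        hnb i _ b hfi (pathGraph_adj.mpr (Or.inr (by show i.val - 1 + 1 = i.val; omega)))
      have e2 : f ⟨i.val + 1, by omega⟩ = Sum.inr 0 :=
        hnb i _ b hfi (pathGraph_adj.mpr (Or.inl (by show i.val + 1 = i.val + 1; rfl)))
      have := hcen _ _ e1 e2
      simp only [Fin.mk.injEq] at this
      omega
    have hB : ∀ (i j : Fin (c+4)) (b b' : Fin (m+3)),
        f i = Sum.inl (Sum.inr b) → f j = Sum.inl (Sum.inr b') → i = j := by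
      intro i j b b' hi hj
      rcases hA i b hi with h0 | hl <;> rcases hA j b' hj with h0' | hl'
      · exact Fin.ext (h0.trans h0'.symm)
      · exfalso
        have e1 : f ⟨1, by omega⟩ = Sum.inr 0 := by
          refine hnb i _ b hi (pathGraph_adj.mpr (Or.inl ?_)); show i.val + 1 = 1; omega
        have e2 : f ⟨c+2, by omega⟩ = Sum.inr 0 := by
          refine hnb j _ b' hj (pathGraph_adj.mpr (Or.inr ?_)); show c+2+1 = j.val; omega
        have := hcen _ _ e1 e2
        simp only [Fin.mk.injEq] at this
        omega
      · exfalso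
        have e1 : f ⟨1, by omega⟩ = Sum.inr 0 := by
          refine hnb j _ b' hj (pathGraph_adj.mpr (Or.inl ?_)); show j.val + 1 = 1; omega
        have e2 : f ⟨c+2, by omega⟩ = Sum.inr 0 := by
          refine hnb i _ b hi (pathGraph_adj.mpr (Or.inr ?_)); show c+2+1 = i.val; omega
        have := hcen _ _ e1 e2
        simp only [Fin.mk.injEq] at this
        omega
      · exact Fin.ext (hl.trans hl'.symm)
    -- pigeonhole
    let g : Fin (c+4) → Option (Fin (c+1) ⊕ Fin 1) := fun i =>
      Sum.elim (Sum.elim (fun a => some (Sum.inl a)) (fun _ => none))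
        (fun z => some (Sum.inr z)) (f i)
    have hginj : Function.Injective g := by
      intro i j hij
      simp only [g] at hij
      rcases hfi : f i with (a | b) | z <;> rcases hfj : f j with (a' | b') | z' <;>
        rw [hfi, hfj] at hij <;>
        simp only [Sum.elim_inl, Sum.elim_inr, Option.some.injEq, Sum.inl.injEq,
          Sum.inr.injEq, reduceCtorEq] at hij
      · exact f.injective (hfi.trans (by rw [hfj, hij]))
      · exact hB i j b b' hfi hfj
      · exact f.injective (hfi.trans (by rw [hfj, Subsingleton.elim z z']))
    have hcle := Fintype.card_le_of_injective g hginj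
    rw [Fintype.card_fin, Fintype.card_option, Fintype.card_sum, Fintype.card_fin,
      Fintype.card_fin] at hcle
    omega
  · -- edge count
    haveI : DecidableRel G.Adj := Classical.decRel _
    have hcard : G.edgeSet.ncard = G.edgeFinset.card := by
      rw [SimpleGraph.edgeFinset, Set.ncard_eq_toFinset_card']
    rw [hcard]
    have hs := G.sum_degrees_eq_twice_card_edges
    -- degree computations
    have d2 : ∀ b : Fin (m+3), G.degree (Sum.inl (Sum.inr b)) = 1 := by
      intro b
      have : G.neighborFinset (Sum.inl (Sum.inr b)) = {Sum.inr 0} := by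
        ext w
        simp only [SimpleGraph.mem_neighborFinset, Finset.mem_singleton]
        exact ⟨h3 b w, fun h => h ▸ h1 (Sum.inr b) 0⟩
      rw [SimpleGraph.degree, this, Finset.card_singleton]
    have d3 : G.degree (Sum.inr 0) = c + 1 + (m+3) := by
      have : G.neighborFinset (Sum.inr 0) = Finset.univ.image Sum.inl := by
        ext w
        simp only [SimpleGraph.mem_neighborFinset, Finset.mem_image, Finset.mem_univ,
          true_and]
        constructor
        · rintro (⟨a', b', heq, rfl, hadj⟩ | ⟨a', b', heq, heq2, hadj⟩ | ⟨hx, hy⟩ | ⟨hx, hy⟩)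
          · simp at heq
          · exfalso; exact hadj (Subsingleton.elim a' b')
          · simp at hx
          · rcases w with u | z
            · exact ⟨u, rfl⟩
            · simp at hy
        · rintro ⟨u, rfl⟩
          exact (h1 u 0).symm
      rw [SimpleGraph.degree, this,
        Finset.card_image_of_injective _ Sum.inl_injective]
      simp
    have d1 : ∀ a : Fin (c+1), G.degree (Sum.inl (Sum.inl a)) = c + 1 := by
      intro a
      have : G.neighborFinset (Sum.inl (Sum.inl a)) =
          insert (Sum.inr 0) ((Finset.univ.image
            (fun x : Fin (c+1) => Sum.inl (Sum.inl x))).erase (Sum.inl (Sum.inl a))) := by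
        ext w
        simp only [SimpleGraph.mem_neighborFinset, Finset.mem_insert, Finset.mem_erase,
          Finset.mem_image, Finset.mem_univ, true_and]
        constructor
        · rintro (⟨a', b', heq, rfl, hadj⟩ | ⟨a', b', heq, heq2, hadj⟩ | ⟨hx, hy⟩ | ⟨hx, hy⟩)
          · cases heq
            rcases b' with a'' | b''
            · right
              have hne : a ≠ a'' := by simpa [SimpleGraph.sum, completeGraph] using hadj
              exact ⟨by simp [hne.symm], a'', rfl⟩
            · simp [SimpleGraph.sum] at hadj
          · simp at heq
          · rcases w with u | z
            · simp at hy
            · left; exact congrArg Sum.inr (Subsingleton.elim z 0)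
          · simp at hx
        · rintro (rfl | ⟨hne, x, rfl⟩)
          · exact h1 (Sum.inl a) 0
          · exact h2 a x (by rintro rfl; exact hne rfl)
      rw [SimpleGraph.degree, this]
      rw [Finset.card_insert_of_notMem (by simp)]
      rw [Finset.card_erase_of_mem (by simp)]
      rw [Finset.card_image_of_injective _
        (fun x y hxy => by simpa using hxy : Function.Injective
          (fun x : Fin (c+1) => (Sum.inl (Sum.inl x) : (Fin (c+1) ⊕ Fin (m+3)) ⊕ Fin 1)))]
      simp
    have hsum : ∑ v, G.degree v = (c+1) * (c+1) + (m+3) + (c+1+(m+3)) := by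
      rw [Fintype.sum_sum_type, Fintype.sum_sum_type, Fin.sum_univ_one, d3]
      simp only [d1, d2]
      rw [Finset.sum_const, Finset.sum_const, Finset.card_univ, Finset.card_univ,
        Fintype.card_fin, Fintype.card_fin, smul_eq_mul, smul_eq_mul, mul_one]
    rw [hsum] at hs
    have key : ∀ t, 2 * Nat.choose (t+2) 2 = (t+2)*(t+1) := by
      intro t
      induction t with
      | zero => rfl
      | succ s ih =>
        rw [show s+1+2 = (s+2)+1 from rfl, Nat.choose_succ_succ, Nat.choose_one_right,
          Nat.mul_add, ih]
        ring
    have hch2 : 2 * Nat.choose (c+2) 2 = (c+2)*(c+1) := key c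
    have hexp : (c+2)*(c+1) = (c+1)*(c+1)+(c+1) := by ring
    omega

theorem extremal_graph_one (n k : ℕ) (hk : 4 ≤ k) (hnk : k < n) :
    (graphJoin ((completeGraph (Fin (k - 3))) ⊕g (⊥ : SimpleGraph (Fin (n - k + 2))))
        (completeGraph (Fin 1))).Connected ∧
    ¬ CopyIn (pathGraph k)
      (graphJoin ((completeGraph (Fin (k - 3))) ⊕g (⊥ : SimpleGraph (Fin (n - k + 2))))
        (completeGraph (Fin 1))) ∧
    (graphJoin ((completeGraph (Fin (k - 3))) ⊕g (⊥ : SimpleGraph (Fin (n - k + 2))))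
        (completeGraph (Fin 1))).edgeSet.ncard = Nat.choose (k - 2) 2 + (n - k + 2) := by
  obtain ⟨c, rfl⟩ : ∃ c, k = c + 4 := ⟨k - 4, by omega⟩
  obtain ⟨m, rfl⟩ : ∃ m, n = c + 4 + (m + 1) := ⟨n - (c + 4) - 1, by omega⟩
  have h1 : c + 4 - 3 = c + 1 := by omega
  have h2 : c + 4 + (m + 1) - (c + 4) + 2 = m + 3 := by omega
  have h3 : c + 4 - 2 = c + 2 := by omega
  rw [h1, h2, h3]
  exact extremal_graph_one_aux c m
end

section
/- For n > k ≥ 4, the graph (K_{k-2⌊k/2⌋+1} ∪ I_{n-⌈k/2⌉}) ∨ K_{⌊k/2⌋-1} is connected, contains no path on k vertices, and has exactly C(⌈k/2⌉,2) + ⌊(k-2)/2⌋·(n - ⌈k/2⌉) edges. -/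
open SimpleGraph

section Helpers

variable {α β : Type*} {G : SimpleGraph α} {H : SimpleGraph β}

lemma join_adj {x y : α ⊕ β} : (graphJoin G H).Adj x y ↔
    (∃ a b, x = Sum.inl a ∧ y = Sum.inl b ∧ G.Adj a b) ∨
    (∃ a b, x = Sum.inr a ∧ y = Sum.inr b ∧ H.Adj a b) ∨
    (x.isLeft ∧ y.isRight) ∨ (x.isRight ∧ y.isLeft) := Iff.rfl

lemma join_adj_inl_inl {a b : α} : (graphJoin G H).Adj (Sum.inl a) (Sum.inl b) ↔ G.Adj a b := by
  rw [join_adj]; simp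

lemma join_adj_inl_inr {a : α} {b : β} : (graphJoin G H).Adj (Sum.inl a) (Sum.inr b) := by
  rw [join_adj]; simp

lemma join_adj_inr_inr {a b : β} : (graphJoin G H).Adj (Sum.inr a) (Sum.inr b) ↔ H.Adj a b := by
  rw [join_adj]; simp

lemma ncard_edgeSet_eq [Fintype α] (G : SimpleGraph α) [Fintype G.edgeSet] :
    G.edgeSet.ncard = G.edgeFinset.card := by
  rw [← coe_edgeFinset, Set.ncard_coe_finset]

lemma join_degree_inl [Fintype α] [Fintype β] [DecidableRel G.Adj] [DecidableRel H.Adj]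
    [DecidableRel (graphJoin G H).Adj] (a : α) :
    (graphJoin G H).degree (Sum.inl a) = G.degree a + Fintype.card β := by
  classical
  rw [← card_neighborFinset_eq_degree, ← card_neighborFinset_eq_degree,
    neighborFinset_eq_filter, neighborFinset_eq_filter, Finset.card_filter, Finset.card_filter,
    Fintype.sum_sum_type]
  simp only [join_adj_inl_inl, join_adj_inl_inr, if_true]
  rw [Finset.sum_const, smul_eq_mul, mul_one, Finset.card_univ]

lemma join_degree_inr [Fintype α] [Fintype β] [DecidableRel G.Adj] [DecidableRel H.Adj]
    [DecidableRel (graphJoin G H).Adj] (b : β) :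
    (graphJoin G H).degree (Sum.inr b) = H.degree b + Fintype.card α := by
  classical
  rw [← card_neighborFinset_eq_degree, ← card_neighborFinset_eq_degree,
    neighborFinset_eq_filter, neighborFinset_eq_filter, Finset.card_filter, Finset.card_filter,
    Fintype.sum_sum_type]
  have h1 : ∀ x : α, (graphJoin G H).Adj (Sum.inr b) (Sum.inl x) := fun x =>
    ((graphJoin G H).adj_symm join_adj_inl_inr)
  simp only [join_adj_inr_inr, h1, if_true]
  rw [Finset.sum_const, smul_eq_mul, mul_one, Finset.card_univ, add_comm]

lemma join_ncard_edgeSet [Fintype α] [Fintype β] (G : SimpleGraph α) (H : SimpleGraph β) :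
    (graphJoin G H).edgeSet.ncard
      = G.edgeSet.ncard + H.edgeSet.ncard + Fintype.card α * Fintype.card β := by
  classical
  rw [ncard_edgeSet_eq, ncard_edgeSet_eq, ncard_edgeSet_eq]
  have h := (graphJoin G H).sum_degrees_eq_twice_card_edges
  rw [Fintype.sum_sum_type] at h
  simp only [join_degree_inl, join_degree_inr] at h
  rw [Finset.sum_add_distrib, Finset.sum_add_distrib, Finset.sum_const, Finset.sum_const,
    G.sum_degrees_eq_twice_card_edges, H.sum_degrees_eq_twice_card_edges,
    smul_eq_mul, smul_eq_mul, Finset.card_univ, Finset.card_univ, mul_comm (Fintype.card β) (Fintype.card α)] at h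
  omega

lemma sum_ncard_edgeSet [Fintype α] [Fintype β] (G : SimpleGraph α) (H : SimpleGraph β) :
    (G ⊕g H).edgeSet.ncard = G.edgeSet.ncard + H.edgeSet.ncard := by
  classical
  rw [ncard_edgeSet_eq, ncard_edgeSet_eq, ncard_edgeSet_eq]
  have hdl : ∀ a : α, (G ⊕g H).degree (Sum.inl a) = G.degree a := by
    intro a
    rw [← card_neighborFinset_eq_degree, ← card_neighborFinset_eq_degree,
      show (G ⊕g H).neighborFinset (Sum.inl a) = Finset.univ.filter ((G ⊕g H).Adj (Sum.inl a)) by ext; simp, neighborFinset_eq_filter, Finset.card_filter, Finset.card_filter,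
      Fintype.sum_sum_type]
    simp [SimpleGraph.sum]
  have hdr : ∀ b : β, (G ⊕g H).degree (Sum.inr b) = H.degree b := by
    intro b
    rw [← card_neighborFinset_eq_degree, ← card_neighborFinset_eq_degree,
      show (G ⊕g H).neighborFinset (Sum.inr b) = Finset.univ.filter ((G ⊕g H).Adj (Sum.inr b)) by ext; simp, neighborFinset_eq_filter, Finset.card_filter, Finset.card_filter,
      Fintype.sum_sum_type]
    simp [SimpleGraph.sum]
  have h := (G ⊕g H).sum_degrees_eq_twice_card_edges
  rw [Fintype.sum_sum_type] at h
  replace h := (Eq.trans (by congr 1; exacts [Finset.sum_congr rfl fun x _ => (by convert (hdl x).symm), Finset.sum_congr rfl fun x _ => (by convert (hdr x).symm)]) h :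
    ∑ a : α, G.degree a + ∑ b : β, H.degree b = _)
  rw [G.sum_degrees_eq_twice_card_edges, H.sum_degrees_eq_twice_card_edges] at h
  omega

lemma complete_ncard_edgeSet (m : ℕ) :
    (completeGraph (Fin m)).edgeSet.ncard = m.choose 2 := by
  have : completeGraph (Fin m) = (⊤ : SimpleGraph (Fin m)) := rfl
  rw [this, ncard_edgeSet_eq, card_edgeFinset_top_eq_card_choose_two, Fintype.card_fin]

lemma bot_ncard_edgeSet : (⊥ : SimpleGraph α).edgeSet.ncard = 0 := by
  simp [edgeSet_bot]

end Helpers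

theorem extremal_graph_two (n k : ℕ) (hk : 4 ≤ k) (hnk : k < n) :
    (graphJoin ((completeGraph (Fin (k - 2 * (k / 2) + 1)))
          ⊕g (⊥ : SimpleGraph (Fin (n - (k + 1) / 2))))
        (completeGraph (Fin (k / 2 - 1)))).Connected ∧
    ¬ CopyIn (pathGraph k)
      (graphJoin ((completeGraph (Fin (k - 2 * (k / 2) + 1)))
          ⊕g (⊥ : SimpleGraph (Fin (n - (k + 1) / 2))))
        (completeGraph (Fin (k / 2 - 1)))) ∧
    (graphJoin ((completeGraph (Fin (k - 2 * (k / 2) + 1)))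
          ⊕g (⊥ : SimpleGraph (Fin (n - (k + 1) / 2))))
        (completeGraph (Fin (k / 2 - 1)))).edgeSet.ncard
      = Nat.choose ((k + 1) / 2) 2 + ((k - 2) / 2) * (n - (k + 1) / 2) := by
  classical
  set a := k - 2 * (k / 2) + 1 with ha_def
  set b := n - (k + 1) / 2 with hb_def
  set c := k / 2 - 1 with hc_def
  have hc1 : 1 ≤ c := by omega
  have z0 : Fin c := ⟨0, by omega⟩
  set G0 := graphJoin ((completeGraph (Fin a)) ⊕g (⊥ : SimpleGraph (Fin b)))
      (completeGraph (Fin c)) with hG0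
  refine ⟨?_, ?_, ?_⟩
  · -- Connected
    have key : ∀ v, v ≠ Sum.inr z0 → G0.Adj v (Sum.inr z0) := by
      rintro (w | z) h
      · exact join_adj_inl_inr
      · rw [join_adj_inr_inr]
        exact fun hzz => h (by rw [hzz])
    have r : ∀ v, G0.Reachable v (Sum.inr z0) := by
      intro v
      by_cases h : v = Sum.inr z0
      · exact h ▸ Reachable.refl _
      · exact (key v h).reachable
    haveI : Nonempty ((Fin a ⊕ Fin b) ⊕ Fin c) := ⟨Sum.inr z0⟩
    exact Connected.mk (fun u v => (r u).trans (r v).symm)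
  · -- no path on k vertices
    rintro ⟨f, hf⟩
    obtain ⟨k', rfl⟩ : ∃ k', k = k' + 1 := ⟨k - 1, by omega⟩
    have x0 : Fin a := ⟨0, by omega⟩
    have hadjc : ∀ u v, G0.Adj u v →
        ((u.isRight : Prop) ∨ (v.isRight : Prop)) ∨
          ((∃ x, u = Sum.inl (Sum.inl x)) ∧ (∃ x, v = Sum.inl (Sum.inl x))) := by
      intro u v h
      rw [hG0, join_adj] at h
      rcases h with ⟨p, q, rfl, rfl, hpq⟩ | ⟨p, q, rfl, rfl, _⟩ | ⟨h1, h2⟩ | ⟨h1, h2⟩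
      · right
        cases p with
        | inl p =>
          cases q with
          | inl q => exact ⟨⟨p, rfl⟩, ⟨q, rfl⟩⟩
          | inr q => simp [SimpleGraph.sum] at hpq
        | inr p =>
          cases q with
          | inl q => simp [SimpleGraph.sum] at hpq
          | inr q => simp [SimpleGraph.sum] at hpq
      · left; left; simp
      · left; right; exact h2
      · left; left; exact h1
    set S : Finset (Fin (k' + 1)) :=
      Finset.univ.filter (fun j => (f j).isRight = true) with hS_def
    set T : Finset (Fin (k' + 1)) :=
      Finset.univ.filter (fun j => ∃ x : Fin a, f j = Sum.inl (Sum.inl x)) with hT_def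
    have hS : S.card ≤ c := by
      have h := Finset.card_le_card_of_injOn (s := S)
          (f := fun j => Sum.elim (fun _ => z0) id (f j))
          (t := (Finset.univ : Finset (Fin c)))
          (fun j _ => Finset.mem_univ _) ?_
      · simpa using h
      · intro j1 h1 j2 h2 he
        simp only [Finset.coe_filter, Set.mem_setOf_eq, Finset.mem_univ, true_and, hS_def,
          Finset.mem_coe, Finset.mem_filter] at h1 h2
        obtain ⟨z1, hz1⟩ := Sum.isRight_iff.mp h1
        obtain ⟨z2, hz2⟩ := Sum.isRight_iff.mp h2
        simp only [hz1, hz2, Sum.elim_inr, id_eq] at he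
        exact f.injective (by rw [hz1, hz2, he])
    have hT : T.card ≤ a := by
      have h := Finset.card_le_card_of_injOn (s := T)
          (f := fun j => Sum.elim (Sum.elim id (fun _ => x0)) (fun _ => x0) (f j))
          (t := (Finset.univ : Finset (Fin a)))
          (fun j _ => Finset.mem_univ _) ?_
      · simpa using h
      · intro j1 h1 j2 h2 he
        simp only [Finset.coe_filter, Set.mem_setOf_eq, Finset.mem_univ, true_and, hT_def,
          Finset.mem_coe, Finset.mem_filter] at h1 h2
        obtain ⟨x1, hx1⟩ := h1
        obtain ⟨x2, hx2⟩ := h2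
        simp only [hx1, hx2, Sum.elim_inl, id_eq] at he
        exact f.injective (by rw [hx1, hx2, he])
    set P1 : Finset (Fin k') :=
      Finset.univ.filter (fun i => (f i.castSucc).isRight = true) with hP1_def
    set P2 : Finset (Fin k') :=
      Finset.univ.filter (fun i => (f i.succ).isRight = true) with hP2_def
    have hP1 : P1.card ≤ S.card := by
      refine Finset.card_le_card_of_injOn Fin.castSucc ?_ ?_
      · intro i hi
        simp only [hP1_def, Finset.mem_coe, Finset.mem_filter, Finset.mem_univ, true_and] at hi
        simp only [hS_def, Finset.mem_coe, Finset.mem_filter, Finset.mem_univ, true_and]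
        exact hi
      · exact fun i _ j _ h => (Fin.castSucc_injective _) h
    have hP2 : P2.card ≤ S.card := by
      refine Finset.card_le_card_of_injOn Fin.succ ?_ ?_
      · intro i hi
        simp only [hP2_def, Finset.mem_coe, Finset.mem_filter, Finset.mem_univ, true_and] at hi
        simp only [hS_def, Finset.mem_coe, Finset.mem_filter, Finset.mem_univ, true_and]
        exact hi
      · exact fun i _ j _ h => (Fin.succ_injective _) h
    set p : Fin k' → Prop :=
      fun i => (f i.castSucc).isRight = true ∨ (f i.succ).isRight = true with hp_def
    set P : Finset (Fin k') := Finset.univ.filter p with hP_def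
    set Q : Finset (Fin k') := Finset.univ.filter (fun i => ¬ p i) with hQ_def
    have hPQ : P.card + Q.card = k' := by
      rw [hP_def, hQ_def, Finset.card_filter_add_card_filter_not, Finset.card_univ,
        Fintype.card_fin]
    have hPP : P.card ≤ P1.card + P2.card := by
      refine le_trans (Finset.card_le_card ?_) (Finset.card_union_le _ _)
      intro i hi
      simp only [hP_def, hp_def, Finset.mem_filter, Finset.mem_univ, true_and] at hi
      simp only [Finset.mem_union, hP1_def, hP2_def, Finset.mem_filter, Finset.mem_univ, true_and]
      exact hi
    have hadj : ∀ i : Fin k', G0.Adj (f i.castSucc) (f i.succ) := by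
      intro i
      apply hf
      rw [pathGraph_adj]
      left
      simp
    have hQT : ∀ i ∈ Q, i.castSucc ∈ T ∧ i.succ ∈ T := by
      intro i hi
      simp only [hQ_def, hp_def, Finset.mem_filter, Finset.mem_univ, true_and, not_or] at hi
      rcases hadjc _ _ (hadj i) with h | ⟨h1, h2⟩
      · rcases h with h | h
        · exact absurd h hi.1
        · exact absurd h hi.2
      · constructor <;>
          simp only [hT_def, Finset.mem_filter, Finset.mem_univ, true_and]
        · exact h1
        · exact h2
    rcases Q.eq_empty_or_nonempty with hQe | hQne
    · have hq0 : Q.card = 0 := by rw [hQe]; rfl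
      omega
    · have hQlt : Q.card < T.card := by
        set i0 := Q.min' hQne with hi0
        have himg : Q.image Fin.succ ⊆ T := by
          intro x hx
          obtain ⟨i, hi, rfl⟩ := Finset.mem_image.mp hx
          exact (hQT i hi).2
        have hmT : i0.castSucc ∈ T := (hQT i0 (Q.min'_mem hQne)).1
        have hnot : i0.castSucc ∉ Q.image Fin.succ := by
          rw [Finset.mem_image]
          rintro ⟨j, hj, hje⟩
          have hval : j.val + 1 = i0.val := by
            have := congrArg Fin.val hje
            simpa using this
          have hle := Q.min'_le j hj
          rw [← hi0, Fin.le_def] at hle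
          omega
        have hcard : Q.card = (Q.image Fin.succ).card :=
          (Finset.card_image_of_injective _ (Fin.succ_injective _)).symm
        rw [hcard]
        exact Finset.card_lt_card ((Finset.ssubset_iff_of_subset himg).mpr
          ⟨i0.castSucc, hmT, hnot⟩)
      omega
  · -- edge count
    rw [hG0, join_ncard_edgeSet, sum_ncard_edgeSet, complete_ncard_edgeSet,
      complete_ncard_edgeSet, bot_ncard_edgeSet, Fintype.card_sum, Fintype.card_fin,
      Fintype.card_fin, Fintype.card_fin]
    obtain ⟨m, hm | hm⟩ := Nat.even_or_odd' k
    · obtain ⟨m', rfl⟩ : ∃ m', m = m' + 2 := ⟨m - 2, by omega⟩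
      have e1 : a = 1 := by omega
      have e2 : c = m' + 1 := by omega
      have e3 : (k + 1) / 2 = m' + 2 := by omega
      have e4 : (k - 2) / 2 = m' + 1 := by omega
      have h1 : (m' + 2).choose 2 = (m' + 1).choose 1 + (m' + 1).choose 2 :=
        Nat.choose_succ_succ (m' + 1) 1
      rw [Nat.choose_one_right] at h1
      rw [e1, e2, e3, e4, h1, show Nat.choose 1 2 = 0 from rfl]
      ring
    · obtain ⟨m', rfl⟩ : ∃ m', m = m' + 2 := ⟨m - 2, by omega⟩
      have e1 : a = 2 := by omega
      have e2 : c = m' + 1 := by omega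
      have e3 : (k + 1) / 2 = m' + 3 := by omega
      have e4 : (k - 2) / 2 = m' + 1 := by omega
      have h1 : (m' + 2).choose 2 = (m' + 1).choose 1 + (m' + 1).choose 2 :=
        Nat.choose_succ_succ (m' + 1) 1
      have h2 : (m' + 3).choose 2 = (m' + 2).choose 1 + (m' + 2).choose 2 :=
        Nat.choose_succ_succ (m' + 2) 1
      rw [Nat.choose_one_right] at h1 h2
      rw [e1, e2, e3, e4, h2, h1, show Nat.choose 2 2 = 1 from rfl]
      ring
end

section
/- Let G be a connected graph on n vertices containing a path P on k-1 vertices but no path on k vertices. Let u ∈ V(G)\V(P) be a vertex adjacent to s ≥ 1 vertices of P, and suppose a longest path in G\V(P) starting at u has j ≥ 0 vertices. Then s + j ≤ ⌊k/2⌋. -/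
open SimpleGraph

private lemma copy_of_chain {V : Type*} (G : SimpleGraph V) (k : ℕ) (l : List V)
    (hnd : l.Nodup) (hc : l.Chain' G.Adj) (hlen : k ≤ l.length) :
    CopyIn (pathGraph k) G := by
  have key : ∀ (i i' : ℕ) (hi : i < l.length) (hi' : i' < l.length), i + 1 = i' →
      G.Adj (l.get ⟨i, hi⟩) (l.get ⟨i', hi'⟩) := by
    rintro i i' hi hi' rfl
    exact (List.isChain_iff_getElem.mp hc) i (by omega)
  refine ⟨⟨fun i => l.get ⟨i.val, lt_of_lt_of_le i.2 hlen⟩, ?_⟩, ?_⟩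
  · intro i i' h
    have := (hnd.get_inj_iff).mp h
    exact Fin.ext (by simpa using congrArg Fin.val this)
  · intro a b hab
    rw [pathGraph_adj] at hab
    rcases hab with h | h
    · exact key _ _ _ _ h
    · exact (key _ _ _ _ h).symm

private lemma length_lt_of_no_path {V : Type*} {G : SimpleGraph V} {k : ℕ}
    (hno : ¬ CopyIn (pathGraph k) G) (l : List V)
    (hnd : l.Nodup) (hc : l.Chain' G.Adj) : l.length < k := by
  by_contra h
  exact hno (copy_of_chain G k l hnd hc (by omega))

theorem lemma_longest_path_from_outside {V : Type*} [Fintype V] (G : SimpleGraph V)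
    (k : ℕ) (hconn : G.Connected)
    (x y : V) (P : G.Walk x y) (hP : P.IsPath) (hPlen : P.support.length = k - 1)
    (hnoPk : ¬ CopyIn (pathGraph k) G)
    (u : V) (hu : u ∈ {v : V | v ∉ P.support})
    (s : ℕ) (hs : 1 ≤ s) (hsdef : {v : V | v ∈ P.support ∧ G.Adj u v}.ncard = s)
    (j : ℕ)
    (hQex : ∃ (w : {v : V | v ∉ P.support})
        (Q : (G.induce {v : V | v ∉ P.support}).Walk ⟨u, hu⟩ w),
        Q.IsPath ∧ Q.support.length = j)
    (hQmax : ∀ (w : {v : V | v ∉ P.support})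
        (Q : (G.induce {v : V | v ∉ P.support}).Walk ⟨u, hu⟩ w),
        Q.IsPath → Q.support.length ≤ j) :
    s + j ≤ k / 2 := by
  classical
  obtain ⟨w, Q, hQpath, hQlen⟩ := hQex
  set L := P.support with hL
  have hLnd : L.Nodup := hP.support_nodup
  have hLc : L.IsChain G.Adj := P.isChain_adj_support
  have hLlen : L.length = k - 1 := hPlen
  have hLpos : 1 ≤ L.length := List.length_pos_iff.mpr P.support_ne_nil
  have hk2 : 2 ≤ k := by omega
  have hu' : u ∉ L := hu
  have hbound := fun l hnd hc => length_lt_of_no_path (k := k) hnoPk l hnd hc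
  -- the path outside P, as a list of vertices of V
  set M := Q.support.map Subtype.val with hM
  have hMnd : M.Nodup := hQpath.support_nodup.map Subtype.val_injective
  have hMlen : M.length = j := by rw [hM, List.length_map, hQlen]
  have hMc : M.IsChain G.Adj := by
    rw [hM]
    exact List.isChain_map_of_isChain Subtype.val (fun a b hab => hab) Q.isChain_adj_support
  have hMhead : M.head? = some u := by
    rw [hM, Q.support_eq_cons]; rfl
  have hMnotinL : ∀ v ∈ M, v ∉ L := by
    intro v hv
    rw [hM] at hv
    obtain ⟨a, ha, rfl⟩ := List.mem_map.mp hv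
    exact a.2
  have hj1 : 1 ≤ j := by
    rw [← hQlen]
    exact List.length_pos_iff.mpr Q.support_ne_nil
  -- index set of neighbors of u on P
  set S : Set ℕ := {i | ∃ h : i < L.length, G.Adj u (L[i]'h)} with hS
  -- S has cardinality s
  have hs0 : S.ncard = s := by
    have hinj : Set.InjOn (fun i => L.getD i u) S := by
      rintro a ⟨ha, _⟩ b ⟨hb, _⟩ hab
      simp only [List.getD_eq_getElem _ _ ha, List.getD_eq_getElem _ _ hb] at hab
      have := hLnd.get_inj_iff.mp (show L.get ⟨a, ha⟩ = L.get ⟨b, hb⟩ by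
        simpa [List.get_eq_getElem] using hab)
      simpa using congrArg Fin.val this
    have himg : (fun i => L.getD i u) '' S = {v | v ∈ L ∧ G.Adj u v} := by
      ext v
      simp only [Set.mem_image, Set.mem_setOf_eq]
      constructor
      · rintro ⟨i, ⟨hi, hadj⟩, rfl⟩
        rw [List.getD_eq_getElem _ _ hi]
        exact ⟨List.getElem_mem _, hadj⟩
      · rintro ⟨hvL, hadj⟩
        obtain ⟨i, hi, rfl⟩ := List.getElem_of_mem hvL
        exact ⟨i, ⟨hi, hadj⟩, List.getD_eq_getElem _ _ hi⟩
    rw [← Set.ncard_image_of_injOn hinj, himg]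
    exact hsdef
  -- lower bound: every neighbor index is ≥ j
  have hC3 : ∀ i ∈ S, j ≤ i := by
    rintro i ⟨hi, hadj⟩
    have hnd2 : (M.reverse ++ L.drop i).Nodup := by
      rw [List.nodup_append]
      exact ⟨List.nodup_reverse.mpr hMnd, (List.drop_sublist i L).nodup hLnd,
        fun a ha b hb hab => by subst hab; exact hMnotinL a (List.mem_reverse.mp ha) (List.mem_of_mem_drop hb)⟩
    have hch : (M.reverse ++ L.drop i).IsChain G.Adj := by
      rw [List.isChain_append]
      refine ⟨?_, hLc.drop i, ?_⟩
      · rw [List.isChain_reverse]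
        exact hMc.imp fun a b h => h.symm
      · intro a ha b hb
        rw [List.getLast?_reverse, hMhead] at ha
        rw [List.head?_drop, List.getElem?_eq_getElem hi] at hb
        simp only [Option.mem_def, Option.some.injEq] at ha hb
        subst ha; subst hb
        exact hadj
    have := hbound _ hnd2 hch
    rw [List.length_append, List.length_reverse, hMlen, List.length_drop] at this
    omega
  -- upper bound: every neighbor index i satisfies j + i + 1 < k
  have hC2 : ∀ i ∈ S, j + i + 1 < k := by
    rintro i ⟨hi, hadj⟩
    have hgl : (L.take (i+1)).getLast? = some (L[i]'hi) := by
      have hlt : (L.take (i+1)).length - 1 = i := by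
        rw [List.length_take]; omega
      rw [List.getLast?_eq_getElem?, hlt, List.getElem?_take, if_pos (by omega),
        List.getElem?_eq_getElem hi]
    have hnd2 : (M.reverse ++ (L.take (i+1)).reverse).Nodup := by
      rw [List.nodup_append]
      exact ⟨List.nodup_reverse.mpr hMnd, List.nodup_reverse.mpr ((List.take_sublist (i+1) L).nodup hLnd),
        fun a ha b hb hab => by subst hab; exact hMnotinL a (List.mem_reverse.mp ha) (List.mem_of_mem_take (List.mem_reverse.mp hb))⟩
    have hch : (M.reverse ++ (L.take (i+1)).reverse).IsChain G.Adj := by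
      rw [List.isChain_append]
      refine ⟨?_, ?_, ?_⟩
      · rw [List.isChain_reverse]
        exact hMc.imp fun a b h => h.symm
      · rw [List.isChain_reverse]
        exact (hLc.take (i+1)).imp fun a b h => h.symm
      · intro a ha b hb
        rw [List.getLast?_reverse, hMhead] at ha
        rw [List.head?_reverse, hgl] at hb
        simp only [Option.mem_def, Option.some.injEq] at ha hb
        subst ha; subst hb
        exact hadj
    have := hbound _ hnd2 hch
    rw [List.length_append, List.length_reverse, List.length_reverse, hMlen,
      List.length_take] at this
    omega
  -- no two consecutive neighbor indices
  have hC1 : ∀ i ∈ S, i + 1 ∉ S := by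
    rintro i ⟨hi, hadj⟩ ⟨hi1, hadj1⟩
    have hgl : (L.take (i+1)).getLast? = some (L[i]'hi) := by
      have hlt : (L.take (i+1)).length - 1 = i := by
        rw [List.length_take]; omega
      rw [List.getLast?_eq_getElem?, hlt, List.getElem?_take, if_pos (by omega),
        List.getElem?_eq_getElem hi]
    have hnd2 : (L.take (i+1) ++ u :: L.drop (i+1)).Nodup := by
      rw [List.nodup_append]
      refine ⟨(List.take_sublist (i+1) L).nodup hLnd, ?_, ?_⟩
      · rw [List.nodup_cons]
        exact ⟨fun h => hu' (List.mem_of_mem_drop h), (List.drop_sublist (i+1) L).nodup hLnd⟩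
      · intro a ha b hb hab
        subst hab
        rcases List.mem_cons.mp hb with rfl | hb
        · exact hu' (List.mem_of_mem_take ha)
        · exact (List.disjoint_take_drop hLnd le_rfl) ha hb
    have hch : (L.take (i+1) ++ u :: L.drop (i+1)).IsChain G.Adj := by
      rw [List.isChain_append]
      refine ⟨hLc.take (i+1), ?_, ?_⟩
      · rw [List.isChain_cons]
        refine ⟨?_, hLc.drop (i+1)⟩
        intro b hb
        rw [List.head?_drop, List.getElem?_eq_getElem hi1] at hb
        simp only [Option.mem_def, Option.some.injEq] at hb
        subst hb
        exact hadj1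
      · intro a ha b hb
        rw [hgl] at ha
        simp only [Option.mem_def, Option.some.injEq, List.head?_cons] at ha hb
        subst ha; subst hb
        exact hadj.symm
    have := hbound _ hnd2 hch
    rw [List.length_append, List.length_take, List.length_cons, List.length_drop] at this
    omega
  -- gap lemma
  have hgap : ∀ a ∈ S, ∀ b ∈ S, a < b → a + 2 ≤ b := by
    intro a ha b hb hab
    have : a + 1 ≠ b := fun he => hC1 a ha (he ▸ hb)
    omega
  -- injectivity of the halving map
  have hinj2 : Set.InjOn (fun i => (i - j)/2) S := by
    intro a ha b hb hab
    simp only at hab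
    have hja := hC3 a ha
    have hjb := hC3 b hb
    rcases Nat.lt_trichotomy a b with h | h | h
    · have := hgap a ha b hb h; omega
    · exact h
    · have := hgap b hb a ha h; omega
  -- nonemptiness gives k ≥ 2j + 2
  obtain ⟨i0, hi0⟩ : S.Nonempty := Set.nonempty_of_ncard_ne_zero (by omega)
  have hkj : 2*j + 2 ≤ k := by
    have := hC3 i0 hi0
    have := hC2 i0 hi0
    omega
  -- counting
  have hcard : s ≤ (k - 2 - 2*j)/2 + 1 := by
    have h1 : (fun i => (i - j)/2) '' S ⊆ Set.Iio ((k - 2 - 2*j)/2 + 1) := by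
      rintro _ ⟨i, hiS, rfl⟩
      have h2 := hC2 i hiS
      have h3 := hC3 i hiS
      simp only [Set.mem_Iio]
      omega
    calc s = S.ncard := hs0.symm
      _ = ((fun i => (i - j)/2) '' S).ncard := (Set.ncard_image_of_injOn hinj2).symm
      _ ≤ (Set.Iio ((k - 2 - 2*j)/2 + 1)).ncard := Set.ncard_le_ncard h1 (Set.finite_Iio _)
      _ = (k - 2 - 2*j)/2 + 1 := by
          rw [← Finset.coe_range, Set.ncard_coe_finset, Finset.card_range]
  omega
end

section
/- Let G be a connected graph on k vertices with no Hamiltonian path but containing a path P = (v_1, v_2, ..., v_{k-1}) on k-1 vertices, and let u be the vertex of G not on P. If u is adjacent to s vertices of P, then s ≤ ⌊k/2⌋ - 1. -/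
open SimpleGraph

lemma copyIn_of_list {V : Type*} (G : SimpleGraph V) (k : ℕ) (L : List V)
    (hlen : L.length = k) (hnd : L.Nodup) (hch : L.Chain' G.Adj) :
    CopyIn (pathGraph k) G := by
  refine ⟨⟨fun i => L.get ⟨i, by omega⟩, ?_⟩, ?_⟩
  · intro a b hab
    have := (List.Nodup.get_inj_iff hnd).mp hab
    exact Fin.ext (by simpa using congrArg Fin.val this)
  · intro a b hab
    rw [pathGraph_adj] at hab
    have h := List.isChain_iff_getElem.mp hch
    have ha := a.isLt
    have hb := b.isLt
    show G.Adj (L.get ⟨a, _⟩) (L.get ⟨b, _⟩)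
    rcases hab with h1 | h1
    · have hb' : (⟨(b : ℕ), by omega⟩ : Fin L.length) = ⟨(a : ℕ) + 1, by omega⟩ := by
        rw [Fin.mk.injEq]; omega
      rw [hb']
      exact h a (by omega)
    · have ha' : (⟨(a : ℕ), by omega⟩ : Fin L.length) = ⟨(b : ℕ) + 1, by omega⟩ := by
        rw [Fin.mk.injEq]; omega
      rw [ha']
      exact (h b (by omega)).symm

theorem lemma_no_ham_path_degree_bound {V : Type*} [Fintype V] (G : SimpleGraph V)
    (k : ℕ) (hcard : Fintype.card V = k) (hconn : G.Connected)
    (hnoHam : ¬ CopyIn (pathGraph k) G)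
    (x y : V) (P : G.Walk x y) (hP : P.IsPath) (hPlen : P.support.length = k - 1)
    (u : V) (hu : u ∉ P.support)
    (s : ℕ) (hsdef : {v : V | v ∈ P.support ∧ G.Adj u v}.ncard = s) :
    s ≤ k / 2 - 1 := by
  classical
  set L := P.support with hLdef
  have hnd : L.Nodup := hP.support_nodup
  have hch : L.Chain' G.Adj := P.isChain_adj_support
  have hne : L ≠ [] := P.support_ne_nil
  have hpos : 1 ≤ L.length := List.length_pos_iff.mpr hne
  have hk2 : 2 ≤ k := by omega
  -- claim 1: u is not adjacent to the first vertex of P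
  have claim1 : ∀ i (hi : i < L.length), G.Adj u L[i] → i ≠ 0 := by
    rintro i hi hadj rfl
    apply hnoHam
    apply copyIn_of_list G k (u :: L)
    · simp [hPlen]; omega
    · exact List.nodup_cons.mpr ⟨hu, hnd⟩
    · refine List.isChain_cons.mpr ⟨?_, hch⟩
      intro z hz
      rw [List.head?_eq_getElem?, List.getElem?_eq_getElem hi, Option.mem_some_iff] at hz
      exact hz ▸ hadj
  -- claim 2: u is not adjacent to the last vertex of P
  have claim2 : ∀ i (hi : i < L.length), G.Adj u L[i] → i + 1 ≠ L.length := by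
    intro i hi hadj heq
    apply hnoHam
    apply copyIn_of_list G k (L ++ [u])
    · simp [hPlen]; omega
    · exact (List.perm_append_singleton u L).nodup_iff.mpr (List.nodup_cons.mpr ⟨hu, hnd⟩)
    · refine List.isChain_append.mpr ⟨hch, List.isChain_singleton u, ?_⟩
      intro a ha b hb
      rw [List.getLast?_eq_getLast_of_ne_nil hne, Option.mem_some_iff] at ha
      simp only [List.head?_cons, Option.mem_some_iff] at hb
      subst ha hb
      obtain rfl : i = L.length - 1 := by omega
      rw [List.getLast_eq_getElem]
      exact hadj.symm
  -- claim 3: u is not adjacent to two consecutive vertices of P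
  have claim3 : ∀ i (hi : i + 1 < L.length), G.Adj u L[i] → G.Adj u L[i+1] → False := by
    intro i hi hadj1 hadj2
    apply hnoHam
    apply copyIn_of_list G k (L.take (i+1) ++ u :: L.drop (i+1))
    · simp [hPlen]; omega
    · rw [List.nodup_middle, List.take_append_drop]
      exact List.nodup_cons.mpr ⟨hu, hnd⟩
    · refine List.isChain_append.mpr ⟨hch.take _, ?_, ?_⟩
      · rw [List.drop_eq_getElem_cons hi]
        refine List.isChain_cons_cons.mpr ⟨hadj2, ?_⟩
        rw [← List.drop_eq_getElem_cons hi]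
        exact hch.drop _
      · intro a ha b hb
        simp only [List.head?_cons, Option.mem_some_iff] at hb
        subst hb
        rw [List.take_succ, List.getElem?_eq_getElem (by omega)] at ha
        simp only [Option.toList_some, List.getLast?_concat, Option.mem_some_iff] at ha
        subst ha
        exact hadj1.symm
  -- index facts for neighbors of u on P
  set S := {v : V | v ∈ L ∧ G.Adj u v} with hSdef
  have hidx : ∀ v ∈ S, 1 ≤ L.idxOf v ∧ L.idxOf v + 2 ≤ L.length := by
    intro v hv
    have hmem : v ∈ L := hv.1
    have hilt : L.idxOf v < L.length := List.idxOf_lt_length_iff.mpr hmem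
    have hget : L[L.idxOf v] = v := List.getElem_idxOf hilt
    have hadj : G.Adj u (L[L.idxOf v]'hilt) := by rw [hget]; exact hv.2
    have h1 := claim1 _ hilt hadj
    have h2 := claim2 _ hilt hadj
    exact ⟨by omega, by omega⟩
  -- the map v ↦ (indexOf v - 1)/2 is injective on S
  set g : V → ℕ := fun v => (L.idxOf v - 1) / 2 with hgdef
  have hinj : Set.InjOn g S := by
    intro v hv w hw hgvw
    by_contra hne'
    have hiv : L.idxOf v < L.length := List.idxOf_lt_length_iff.mpr hv.1
    have hiw : L.idxOf w < L.length := List.idxOf_lt_length_iff.mpr hw.1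
    obtain ⟨hv1, hv2⟩ := hidx v hv
    obtain ⟨hw1, hw2⟩ := hidx w hw
    have hvget : L[L.idxOf v] = v := List.getElem_idxOf hiv
    have hwget : L[L.idxOf w] = w := List.getElem_idxOf hiw
    have hij : L.idxOf v ≠ L.idxOf w := by
      intro h
      apply hne'
      rw [← hvget, ← hwget]
      congr 1
    have hav : G.Adj u (L[L.idxOf v]'hiv) := by rw [hvget]; exact hv.2
    have haw : G.Adj u (L[L.idxOf w]'hiw) := by rw [hwget]; exact hw.2
    have hnc : ∀ i j (hi : i < L.length) (hj : j < L.length),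
        G.Adj u (L[i]'hi) → G.Adj u (L[j]'hj) → j ≠ i + 1 := by
      rintro i j hi hj ha1 ha2 rfl
      exact claim3 i hj ha1 ha2
    have h1 := hnc _ _ hiv hiw hav haw
    have h2 := hnc _ _ hiw hiv haw hav
    simp only [hgdef] at hgvw
    omega
  -- count
  have hSfin : S.Finite := L.finite_toSet.subset (fun v hv => hv.1)
  have himg : g '' S ⊆ ↑(Finset.range ((k-2)/2)) := by
    rintro _ ⟨v, hv, rfl⟩
    obtain ⟨hv1, hv2⟩ := hidx v hv
    simp only [Finset.coe_range, Set.mem_Iio, hgdef]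
    omega
  have := Set.ncard_le_ncard himg (Finset.range ((k-2)/2)).finite_toSet
  rw [Set.ncard_image_of_injOn hinj, Set.ncard_coe_finset, Finset.card_range, hsdef] at this
  omega
end
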